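/- For every real number x with 0 < x < 1, the infinite product ∏_{k≥1} (1 - x^k)^{-1} equals the convergent series ∑_{m≥0} x^{m(m+1)} / ( (∏_{i=1}^{m} (1 - x^i))^2 · (1 - x^{m+1}) ). -/

import Mathlib

open Filter Finset Real

namespace DurfeeAux

noncomputable def Qp (x : ℝ) (m : ℕ) : ℝ := ∏ i ∈ Finset.range m, (1 - x ^ (i + 1))
noncomputable def Zp (x z : ℝ) (m : ℕ) : ℝ := ∏ i ∈ Finset.range m, (1 - z * x ^ i)
noncomputable def uu (x z : ℝ) (m : ℕ) : ℝ := z ^ m * x ^ (m * (m - 1)) / (Qp x m * Zp x z m)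
noncomputable def Cb (x : ℝ) : ℝ := Real.exp (-(x / (1 - x) ^ 2))

variable {x z : ℝ}

lemma Cb_pos : 0 < Cb x := Real.exp_pos _

-- basic factor bounds
lemma factor_lb (hx0 : 0 < x) (hx1 : x < 1) (i : ℕ) :
    Real.exp (-(x ^ (i + 1) / (1 - x))) ≤ 1 - x ^ (i + 1) := by
  have hxp : 0 < x ^ (i + 1) := pow_pos hx0 _
  have hxlt : x ^ (i + 1) < 1 := pow_lt_one₀ hx0.le hx1 (Nat.succ_ne_zero i)
  have h1t : 0 < 1 - x ^ (i + 1) := by linarith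
  have h1x : 0 < 1 - x := by linarith
  -- exp(t/(1-x)) ≥ 1 + t/(1-t) = 1/(1-t)
  have hle : x ^ (i + 1) / (1 - x ^ (i + 1)) ≤ x ^ (i + 1) / (1 - x) := by
    apply div_le_div_of_nonneg_left hxp.le h1x
    have : x ^ (i + 1) ≤ x := by
      calc x ^ (i + 1) ≤ x ^ 1 := pow_le_pow_of_le_one hx0.le hx1.le (by omega)
      _ = x := pow_one x
    linarith
  have hexp : 1 / (1 - x ^ (i + 1)) ≤ Real.exp (x ^ (i + 1) / (1 - x)) := by
    have h := Real.add_one_le_exp (x ^ (i + 1) / (1 - x))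
    have : 1 / (1 - x ^ (i + 1)) = x ^ (i + 1) / (1 - x ^ (i + 1)) + 1 := by
      field_simp
      ring
    rw [this]
    calc x ^ (i + 1) / (1 - x ^ (i + 1)) + 1 ≤ x ^ (i + 1) / (1 - x) + 1 := by linarith
    _ ≤ Real.exp (x ^ (i + 1) / (1 - x)) := h
  rw [Real.exp_neg]
  rw [inv_le_comm₀ (Real.exp_pos _) h1t] at *
  calc (1 - x ^ (i+1))⁻¹ = 1 / (1 - x ^ (i+1)) := (one_div _).symm
  _ ≤ Real.exp (x ^ (i + 1) / (1 - x)) := hexp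

lemma sum_exponents_le (hx0 : 0 < x) (hx1 : x < 1) (m : ℕ) :
    ∑ i ∈ range m, x ^ (i + 1) / (1 - x) ≤ x / (1 - x) ^ 2 := by
  have h1x : 0 < 1 - x := by linarith
  have hgeom : ∑ i ∈ range m, x ^ i ≤ 1 / (1 - x) := by
    rw [geom_sum_eq (by linarith : x ≠ 1)]
    have e : (x ^ m - 1) / (x - 1) = (1 - x ^ m) / (1 - x) := by
      rw [div_eq_div_iff (by linarith) (by linarith)]; ring
    rw [e]
    have : 0 < x ^ m := pow_pos hx0 m
    gcongr <;> nlinarith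
  calc ∑ i ∈ range m, x ^ (i + 1) / (1 - x) = (x * ∑ i ∈ range m, x ^ i) / (1 - x) := by
        rw [Finset.mul_sum, Finset.sum_div]
        congr 1; ext i; rw [pow_succ']
  _ ≤ (x * (1 / (1 - x))) / (1 - x) := by
        have hs : 0 ≤ ∑ i ∈ range m, x ^ i := Finset.sum_nonneg fun i _ => (pow_pos hx0 i).le
        gcongr <;> first | exact Or.inl trivial | exact hgeom | positivity
  _ = x / (1 - x) ^ 2 := by rw [sq]; field_simp

lemma Cb_le_Qp (hx0 : 0 < x) (hx1 : x < 1) (m : ℕ) : Cb x ≤ Qp x m := by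
  have : Cb x ≤ Real.exp (-(∑ i ∈ range m, x ^ (i+1) / (1 - x))) := by
    apply Real.exp_le_exp.2
    simp only [neg_le_neg_iff]
    exact sum_exponents_le hx0 hx1 m
  refine this.trans ?_
  rw [show -(∑ i ∈ range m, x ^ (i+1) / (1 - x)) = ∑ i ∈ range m, -(x ^ (i+1) / (1 - x)) by
    rw [Finset.sum_neg_distrib], Real.exp_sum]
  apply Finset.prod_le_prod (fun i _ => (Real.exp_pos _).le)
  intro i _
  exact factor_lb hx0 hx1 i


lemma one_sub_pow_pos (hx0 : 0 < x) (hx1 : x < 1) (i : ℕ) : 0 < 1 - x ^ (i + 1) := by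
  have : x ^ (i + 1) < 1 := pow_lt_one₀ hx0.le hx1 (Nat.succ_ne_zero i)
  linarith

lemma Qp_pos (hx0 : 0 < x) (hx1 : x < 1) (m : ℕ) : 0 < Qp x m :=
  Finset.prod_pos fun i _ => one_sub_pow_pos hx0 hx1 i

lemma Qp_le_one (hx0 : 0 < x) (hx1 : x < 1) (m : ℕ) : Qp x m ≤ 1 := by
  apply Finset.prod_le_one (fun i _ => (one_sub_pow_pos hx0 hx1 i).le)
  intro i _
  have : 0 < x ^ (i + 1) := pow_pos hx0 _
  linarith

lemma zfac_pos (hx0 : 0 < x) (hx1 : x < 1) (hz0 : 0 ≤ z) (hzx : z ≤ x) (i : ℕ) :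
    0 < 1 - z * x ^ i := by
  have h1 : z * x ^ i ≤ x * x ^ i := by
    apply mul_le_mul_of_nonneg_right hzx (pow_pos hx0 i).le
  have h2 : x * x ^ i = x ^ (i + 1) := by rw [pow_succ']
  have := one_sub_pow_pos hx0 hx1 i
  linarith

lemma zfac_le (hx0 : 0 < x) (hx1 : x < 1) (hz0 : 0 ≤ z) (hzx : z ≤ x) (i : ℕ) :
    1 - x ^ (i + 1) ≤ 1 - z * x ^ i := by
  have h1 : z * x ^ i ≤ x * x ^ i :=
    mul_le_mul_of_nonneg_right hzx (pow_pos hx0 i).le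
  have h2 : x * x ^ i = x ^ (i + 1) := by rw [pow_succ']
  linarith

lemma Zp_pos (hx0 : 0 < x) (hx1 : x < 1) (hz0 : 0 ≤ z) (hzx : z ≤ x) (m : ℕ) :
    0 < Zp x z m :=
  Finset.prod_pos fun i _ => zfac_pos hx0 hx1 hz0 hzx i

lemma Zp_le_one (hx0 : 0 < x) (hx1 : x < 1) (hz0 : 0 ≤ z) (hzx : z ≤ x) (m : ℕ) :
    Zp x z m ≤ 1 := by
  apply Finset.prod_le_one (fun i _ => (zfac_pos hx0 hx1 hz0 hzx i).le)
  intro i _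
  have : 0 ≤ z * x ^ i := mul_nonneg hz0 (pow_pos hx0 i).le
  linarith

lemma Cb_le_Zp (hx0 : 0 < x) (hx1 : x < 1) (hz0 : 0 ≤ z) (hzx : z ≤ x) (m : ℕ) :
    Cb x ≤ Zp x z m := by
  refine (Cb_le_Qp hx0 hx1 m).trans ?_
  exact Finset.prod_le_prod (fun i _ => (one_sub_pow_pos hx0 hx1 i).le)
    (fun i _ => zfac_le hx0 hx1 hz0 hzx i)

lemma uu_nonneg (hx0 : 0 < x) (hx1 : x < 1) (hz0 : 0 ≤ z) (hzx : z ≤ x) (m : ℕ) :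
    0 ≤ uu x z m := by
  unfold uu
  have := Qp_pos hx0 hx1 m
  have := Zp_pos hx0 hx1 hz0 hzx m
  positivity

lemma uu_le (hx0 : 0 < x) (hx1 : x < 1) (hz0 : 0 ≤ z) (hzx : z ≤ x) (m : ℕ) :
    uu x z m ≤ z ^ m * (Cb x)⁻¹ * (Cb x)⁻¹ := by
  unfold uu
  have hq := Qp_pos hx0 hx1 m
  have hzp := Zp_pos hx0 hx1 hz0 hzx m
  have hcq := Cb_le_Qp hx0 hx1 m
  have hcz := Cb_le_Zp hx0 hx1 hz0 hzx m
  have hc := Cb_pos (x := x)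
  have hnum : z ^ m * x ^ (m * (m - 1)) ≤ z ^ m := by
    have h1 : x ^ (m * (m - 1)) ≤ 1 := pow_le_one₀ hx0.le hx1.le
    have h2 : 0 ≤ z ^ m := pow_nonneg hz0 m
    nlinarith
  calc z ^ m * x ^ (m * (m - 1)) / (Qp x m * Zp x z m)
      ≤ z ^ m / (Qp x m * Zp x z m) := by
        gcongr
  _ ≤ z ^ m / (Cb x * Cb x) := by
        gcongr
  _ = z ^ m * (Cb x)⁻¹ * (Cb x)⁻¹ := by field_simp

lemma uu_summable (hx0 : 0 < x) (hx1 : x < 1) (hz0 : 0 ≤ z) (hzx : z ≤ x) :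
    Summable (uu x z) := by
  apply Summable.of_nonneg_of_le (uu_nonneg hx0 hx1 hz0 hzx) (uu_le hx0 hx1 hz0 hzx)
  apply Summable.mul_right
  apply Summable.mul_right
  exact summable_geometric_of_lt_one hz0 (lt_of_le_of_lt hzx hx1)

-- recursions
lemma Qp_succ (m : ℕ) : Qp x (m + 1) = Qp x m * (1 - x ^ (m + 1)) :=
  Finset.prod_range_succ _ m

lemma Zp_succ (m : ℕ) : Zp x z (m + 1) = Zp x z m * (1 - z * x ^ m) :=
  Finset.prod_range_succ _ m

lemma Zp_shift (m : ℕ) : Zp x z (m + 1) = (1 - z) * Zp x (x * z) m := by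
  unfold Zp
  rw [Finset.prod_range_succ' (fun i => 1 - z * x ^ i) m]
  simp only [pow_zero, mul_one]
  rw [mul_comm]
  congr 1
  apply Finset.prod_congr rfl
  intro i _
  rw [pow_succ']
  ring

lemma Qp_shift (m : ℕ) : Qp x (m + 1) = (1 - x) * Zp x (x * x) m := by
  unfold Qp Zp
  rw [Finset.prod_range_succ' (fun i => 1 - x ^ (i + 1)) m]
  norm_num
  rw [mul_comm]
  congr 1
  apply Finset.prod_congr rfl
  intro i _
  congr 1
  rw [show i + 1 + 1 = i + 2 by ring]
  ring


noncomputable def gg (x z : ℝ) : ℕ → ℝ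
  | 0 => 0
  | (k + 1) => (1 - z) * z ^ (k + 1) * x ^ ((k + 1) * k) / (Qp x k * Zp x z (k + 1))

lemma gg_nonneg (hx0 : 0 < x) (hx1 : x < 1) (hz0 : 0 ≤ z) (hzx : z ≤ x) (m : ℕ) :
    0 ≤ gg x z m := by
  cases m with
  | zero => simp [gg]
  | succ k =>
    unfold gg
    have hq := Qp_pos hx0 hx1 k
    have hzp := Zp_pos hx0 hx1 hz0 hzx (k + 1)
    have hz1 : z < 1 := lt_of_le_of_lt hzx hx1
    have : 0 < 1 - z := by linarith
    positivity

lemma gg_le (hx0 : 0 < x) (hx1 : x < 1) (hz0 : 0 ≤ z) (hzx : z ≤ x) (m : ℕ) :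
    gg x z m ≤ z ^ m * ((Cb x)⁻¹ * (Cb x)⁻¹) := by
  cases m with
  | zero =>
    simp only [gg, pow_zero, one_mul]
    have hc := Cb_pos (x := x)
    positivity
  | succ k =>
    unfold gg
    have hq := Qp_pos hx0 hx1 k
    have hzp := Zp_pos hx0 hx1 hz0 hzx (k + 1)
    have hcq := Cb_le_Qp hx0 hx1 k
    have hcz := Cb_le_Zp hx0 hx1 hz0 hzx (k + 1)
    have hc := Cb_pos (x := x)
    have hz1 : z < 1 := lt_of_le_of_lt hzx hx1
    have hnum : (1 - z) * z ^ (k + 1) * x ^ ((k + 1) * k) ≤ z ^ (k + 1) := by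
      have h1 : x ^ ((k + 1) * k) ≤ 1 := pow_le_one₀ hx0.le hx1.le
      have h2 : 0 ≤ z ^ (k + 1) := pow_nonneg hz0 _
      have h3 : (1 - z) * z ^ (k + 1) * x ^ ((k + 1) * k) ≤ (1 : ℝ) * z ^ (k + 1) * 1 := by
        apply mul_le_mul _ h1 (pow_nonneg hx0.le _) (by positivity)
        apply mul_le_mul (by linarith) le_rfl h2 zero_le_one
      simpa using h3
    calc (1 - z) * z ^ (k + 1) * x ^ ((k + 1) * k) / (Qp x k * Zp x z (k + 1))
        ≤ z ^ (k + 1) / (Qp x k * Zp x z (k + 1)) := by gcongr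
    _ ≤ z ^ (k + 1) / (Cb x * Cb x) := by gcongr
    _ = z ^ (k + 1) * ((Cb x)⁻¹ * (Cb x)⁻¹) := by field_simp

lemma step (hx0 : 0 < x) (hx1 : x < 1) (hz0 : 0 ≤ z) (hzx : z ≤ x) (m : ℕ) :
    (1 - z) * uu x z m - uu x (x * z) m = gg x z m - gg x z (m + 1) := by
  have hz1 : z < 1 := lt_of_le_of_lt hzx hx1
  have h1z : (1 : ℝ) - z ≠ 0 := by linarith
  cases m with
  | zero =>
    simp only [uu, gg, Qp, Zp, Finset.range_zero, Finset.prod_empty, Finset.range_one,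
      Finset.prod_range_succ, pow_zero, pow_one, mul_one, one_mul, Nat.zero_mul, Nat.mul_zero]
    norm_num
    field_simp
  | succ k =>
    have hQk := Qp_pos hx0 hx1 k
    have hQk1 := Qp_pos hx0 hx1 (k + 1)
    have hZk1 := Zp_pos hx0 hx1 hz0 hzx (k + 1)
    have hZk2 := Zp_pos hx0 hx1 hz0 hzx (k + 2)
    have hxz0 : 0 ≤ x * z := mul_nonneg hx0.le hz0
    have hxzx : x * z ≤ x := by nlinarith
    have hZxz := Zp_pos hx0 hx1 hxz0 hxzx (k + 1)
    -- rewrite uu x (x*z) (k+1) using Zp_shift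
    have hshift : Zp x (x * z) (k + 1) = Zp x z (k + 2) / (1 - z) := by
      rw [show k + 2 = (k + 1) + 1 by ring, Zp_shift (m := k + 1)]
      field_simp
    have e1 : uu x (x * z) (k + 1)
        = (1 - z) * (z ^ (k + 1) * x ^ ((k + 1) * k + (k + 1))) / (Qp x (k + 1) * Zp x z (k + 2)) := by
      unfold uu
      rw [hshift]
      rw [show (k + 1) * (k + 1 - 1) = (k + 1) * k by norm_num]
      rw [mul_pow, pow_add x ((k + 1) * k) (k + 1)]
      field_simp
    have e2 : uu x z (k + 1)
        = z ^ (k + 1) * x ^ ((k + 1) * k) / (Qp x (k + 1) * Zp x z (k + 1)) := by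
      unfold uu
      rw [show (k + 1) * (k + 1 - 1) = (k + 1) * k by norm_num]
    have e3 : gg x z (k + 2)
        = (1 - z) * z ^ (k + 2) * (x ^ ((k + 1) * k) * x ^ (2 * k + 2)) /
            (Qp x (k + 1) * Zp x z (k + 2)) := by
      show (1 - z) * z ^ (k + 2) * x ^ ((k + 2) * (k + 1)) / (Qp x (k + 1) * Zp x z (k + 2)) = _
      rw [show (k + 2) * (k + 1) = (k + 1) * k + (2 * k + 2) by ring,
        pow_add x ((k + 1) * k) (2 * k + 2)]
    have e4 : gg x z (k + 1)
        = (1 - z) * z ^ (k + 1) * x ^ ((k + 1) * k) / (Qp x k * Zp x z (k + 1)) := rfl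
    rw [e1, e2, e3, e4]
    have hq1 : Qp x (k + 1) = Qp x k * (1 - x ^ (k + 1)) := Qp_succ k
    have hz2 : Zp x z (k + 2) = Zp x z (k + 1) * (1 - z * x ^ (k + 1)) := Zp_succ (k + 1)
    have hx1ne : (1 : ℝ) - x ^ (k + 1) ≠ 0 := (one_sub_pow_pos hx0 hx1 k).ne'
    have hzx1ne : (1 : ℝ) - z * x ^ (k + 1) ≠ 0 := (zfac_pos hx0 hx1 hz0 hzx (k + 1)).ne'
    rw [hq1, hz2]
    have hZk1ne : Zp x z (k + 1) ≠ 0 := hZk1.ne'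
    have hQkne : Qp x k ≠ 0 := hQk.ne'
    field_simp
    ring_nf
    try rw [show 2 * k + 2 = (k + 1) + (k + 1) by ring,
      pow_add x (k + 1) (k + 1), show z ^ (k + 2) = z ^ (k + 1) * z from pow_succ z (k + 1)]
    try ring

lemma funeq (hx0 : 0 < x) (hx1 : x < 1) (hz0 : 0 ≤ z) (hzx : z ≤ x) :
    (1 - z) * (∑' m, uu x z m) = ∑' m, uu x (x * z) m := by
  have hz1 : z < 1 := lt_of_le_of_lt hzx hx1
  have hxz0 : 0 ≤ x * z := mul_nonneg hx0.le hz0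
  have hxzx : x * z ≤ x := by nlinarith
  have hs1 := uu_summable hx0 hx1 hz0 hzx
  have hs2 := uu_summable hx0 hx1 hxz0 hxzx
  have hd : HasSum (fun m => (1 - z) * uu x z m - uu x (x * z) m)
      ((1 - z) * (∑' m, uu x z m) - ∑' m, uu x (x * z) m) :=
    (hs1.hasSum.mul_left (1 - z)).sub hs2.hasSum
  have hd0 : HasSum (fun m => (1 - z) * uu x z m - uu x (x * z) m) 0 := by
    rw [hd.summable.hasSum_iff_tendsto_nat]
    have heq : ∀ N, ∑ m ∈ range N, ((1 - z) * uu x z m - uu x (x * z) m) = - gg x z N := by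
      intro N
      calc ∑ m ∈ range N, ((1 - z) * uu x z m - uu x (x * z) m)
          = ∑ m ∈ range N, (gg x z m - gg x z (m + 1)) := by
            apply Finset.sum_congr rfl
            intro m _
            exact step hx0 hx1 hz0 hzx m
      _ = gg x z 0 - gg x z N := Finset.sum_range_sub' (gg x z) N
      _ = - gg x z N := by simp [gg]
    simp only [heq]
    rw [show (0 : ℝ) = -0 by norm_num]
    apply Tendsto.neg
    apply squeeze_zero (fun N => gg_nonneg hx0 hx1 hz0 hzx N) (fun N => gg_le hx0 hx1 hz0 hzx N)
    rw [show (0 : ℝ) = 0 * ((Cb x)⁻¹ * (Cb x)⁻¹) by norm_num]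
    exact (tendsto_pow_atTop_nhds_zero_of_lt_one hz0 hz1).mul_const _
  have := hd.unique hd0
  linarith

lemma iter (hx0 : 0 < x) (hx1 : x < 1) (N : ℕ) :
    (∑' m, uu x (x * x) m) * Zp x (x * x) N = ∑' m, uu x ((x * x) * x ^ N) m := by
  induction N with
  | zero => simp [Zp]
  | succ N ih =>
    have hz0 : (0 : ℝ) ≤ (x * x) * x ^ N := by positivity
    have hzx : (x * x) * x ^ N ≤ x := by
      have h1 : x * x ^ N ≤ 1 := by
        have : x * x ^ N = x ^ (N + 1) := (pow_succ' x N).symm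
        rw [this]
        exact pow_le_one₀ hx0.le hx1.le
      nlinarith
    rw [Zp_succ, ← mul_assoc, ih, mul_comm, funeq hx0 hx1 hz0 hzx]
    congr 1
    rw [pow_succ]
    ring

-- the limit of Qp
noncomputable def Lq (x : ℝ) : ℝ := ⨅ N, Qp x N

lemma Qp_anti (hx0 : 0 < x) (hx1 : x < 1) : Antitone (Qp x) := by
  apply antitone_nat_of_succ_le
  intro n
  rw [Qp_succ]
  have h1 := Qp_pos hx0 hx1 n
  have h2 := one_sub_pow_pos hx0 hx1 n
  have h3 : x ^ (n + 1) > 0 := pow_pos hx0 _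
  nlinarith

lemma Qp_tendsto (hx0 : 0 < x) (hx1 : x < 1) :
    Filter.Tendsto (Qp x) Filter.atTop (nhds (Lq x)) := by
  apply tendsto_atTop_ciInf (Qp_anti hx0 hx1)
  exact ⟨0, by rintro y ⟨N, rfl⟩; exact (Qp_pos hx0 hx1 N).le⟩

lemma Cb_le_Lq (hx0 : 0 < x) (hx1 : x < 1) : Cb x ≤ Lq x :=
  le_ciInf fun N => Cb_le_Qp hx0 hx1 N

lemma Lq_pos (hx0 : 0 < x) (hx1 : x < 1) : 0 < Lq x :=
  lt_of_lt_of_le Cb_pos (Cb_le_Lq hx0 hx1)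

lemma Lq_le_prod (hx0 : 0 < x) (hx1 : x < 1) (s : Finset ℕ) :
    Lq x ≤ ∏ i ∈ s, (1 - x ^ (i + 1)) := by
  set M := s.sup id + 1 with hM
  have hsub : s ⊆ Finset.range M := by
    intro i hi
    exact Finset.mem_range.2 (Nat.lt_succ_of_le (Finset.le_sup (f := id) hi))
  have hsd := Finset.prod_sdiff (f := fun i => 1 - x ^ (i + 1)) hsub
  have h1 : ∏ i ∈ Finset.range M \ s, (1 - x ^ (i + 1)) ≤ 1 := by
    apply Finset.prod_le_one (fun i _ => (one_sub_pow_pos hx0 hx1 i).le)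
    intro i _
    have : 0 < x ^ (i + 1) := pow_pos hx0 _
    linarith
  have h2 : 0 < ∏ i ∈ s, (1 - x ^ (i + 1)) :=
    Finset.prod_pos fun i _ => one_sub_pow_pos hx0 hx1 i
  calc Lq x ≤ Qp x M := ciInf_le ⟨0, by rintro y ⟨N, rfl⟩; exact (Qp_pos hx0 hx1 N).le⟩ M
  _ = (∏ i ∈ Finset.range M \ s, (1 - x ^ (i + 1))) * ∏ i ∈ s, (1 - x ^ (i + 1)) := hsd.symm
  _ ≤ 1 * ∏ i ∈ s, (1 - x ^ (i + 1)) := by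
      apply mul_le_mul_of_nonneg_right h1 h2.le
  _ = ∏ i ∈ s, (1 - x ^ (i + 1)) := one_mul _

lemma hasProd_Q (hx0 : 0 < x) (hx1 : x < 1) :
    HasProd (fun k => 1 - x ^ (k + 1)) (Lq x) := by
  rw [HasProd]
  rw [tendsto_order]
  constructor
  · intro b hb
    apply Filter.Eventually.of_forall
    intro s
    exact lt_of_lt_of_le hb (Lq_le_prod hx0 hx1 s)
  · intro b hb
    have : ∀ᶠ N in Filter.atTop, Qp x N < b := (Qp_tendsto hx0 hx1).eventually (gt_mem_nhds hb)
    obtain ⟨N, hN⟩ := this.exists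
    rw [SummationFilter.unconditional_filter, Filter.eventually_atTop]
    refine ⟨Finset.range N, fun s hs => ?_⟩
    have hsub : Finset.range N ⊆ s := hs
    have hsd := Finset.prod_sdiff (f := fun i => 1 - x ^ (i + 1)) hsub
    have h1 : ∏ i ∈ s \ Finset.range N, (1 - x ^ (i + 1)) ≤ 1 := by
      apply Finset.prod_le_one (fun i _ => (one_sub_pow_pos hx0 hx1 i).le)
      intro i _
      have : 0 < x ^ (i + 1) := pow_pos hx0 _
      linarith
    have h2 : (0:ℝ) ≤ Qp x N := (Qp_pos hx0 hx1 N).le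
    calc ∏ i ∈ s, (1 - x ^ (i + 1))
        = (∏ i ∈ s \ Finset.range N, (1 - x ^ (i + 1))) * Qp x N := hsd.symm
    _ ≤ 1 * Qp x N := mul_le_mul_of_nonneg_right h1 h2
    _ = Qp x N := one_mul _
    _ < b := hN


lemma uu_zero (x z : ℝ) : uu x z 0 = 1 := by
  simp [uu, Qp, Zp]

lemma H_ge_one (hx0 : 0 < x) (hx1 : x < 1) (hz0 : 0 ≤ z) (hzx : z ≤ x) :
    1 ≤ ∑' m, uu x z m := by
  have hs := uu_summable hx0 hx1 hz0 hzx
  have := Summable.sum_le_tsum (Finset.range 1) (fun m _ => uu_nonneg hx0 hx1 hz0 hzx m) hs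
  simpa [uu_zero] using this

lemma H_le (hx0 : 0 < x) (hx1 : x < 1) (hz0 : 0 ≤ z) (hzx : z ≤ x) :
    ∑' m, uu x z m ≤ 1 + z * ((Cb x)⁻¹ * (Cb x)⁻¹ * (1 - x)⁻¹) := by
  have hs := uu_summable hx0 hx1 hz0 hzx
  have hs' : Summable (fun m => uu x z (m + 1)) := (summable_nat_add_iff 1).2 hs
  rw [Summable.tsum_eq_zero_add hs, uu_zero]
  have hgs : Summable (fun m : ℕ => z * x ^ m * ((Cb x)⁻¹ * (Cb x)⁻¹)) := by
    apply Summable.mul_right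
    apply Summable.mul_left
    exact summable_geometric_of_lt_one hx0.le hx1
  have hb : ∀ m : ℕ, uu x z (m + 1) ≤ z * x ^ m * ((Cb x)⁻¹ * (Cb x)⁻¹) := by
    intro m
    calc uu x z (m + 1) ≤ z ^ (m + 1) * (Cb x)⁻¹ * (Cb x)⁻¹ := uu_le hx0 hx1 hz0 hzx (m + 1)
    _ ≤ z * x ^ m * ((Cb x)⁻¹ * (Cb x)⁻¹) := by
        have hc := Cb_pos (x := x)
        have h1 : z ^ (m + 1) ≤ z * x ^ m := by
          rw [pow_succ']
          apply mul_le_mul_of_nonneg_left _ hz0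
          exact pow_le_pow_left₀ hz0 hzx m
        have h2 : (0:ℝ) ≤ (Cb x)⁻¹ * (Cb x)⁻¹ := by positivity
        calc z ^ (m + 1) * (Cb x)⁻¹ * (Cb x)⁻¹ = z ^ (m + 1) * ((Cb x)⁻¹ * (Cb x)⁻¹) := by ring
        _ ≤ z * x ^ m * ((Cb x)⁻¹ * (Cb x)⁻¹) := mul_le_mul_of_nonneg_right h1 h2
  have htsle : ∑' m, uu x z (m + 1) ≤ ∑' m : ℕ, z * x ^ m * ((Cb x)⁻¹ * (Cb x)⁻¹) :=
    Summable.tsum_le_tsum hb hs' hgs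
  have : ∑' m : ℕ, z * x ^ m * ((Cb x)⁻¹ * (Cb x)⁻¹)
      = z * ((Cb x)⁻¹ * (Cb x)⁻¹ * (1 - x)⁻¹) := by
    rw [show (fun m : ℕ => z * x ^ m * ((Cb x)⁻¹ * (Cb x)⁻¹))
        = (fun m : ℕ => (z * ((Cb x)⁻¹ * (Cb x)⁻¹)) * x ^ m) by funext m; ring]
    rw [tsum_mul_left, tsum_geometric_of_lt_one hx0.le hx1]
    ring
  linarith [this ▸ htsle]

lemma key_eq (hx0 : 0 < x) (hx1 : x < 1) :
    (∑' m, uu x (x * x) m) * (Lq x / (1 - x)) = 1 := by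
  have h1x : (0:ℝ) < 1 - x := by linarith
  -- limit of LHS of iter
  have hz0 : ∀ N : ℕ, (0:ℝ) ≤ (x * x) * x ^ N := fun N => by positivity
  have hzx : ∀ N : ℕ, (x * x) * x ^ N ≤ x := by
    intro N
    have h1 : x * x ^ N ≤ 1 := by
      have : x * x ^ N = x ^ (N + 1) := (pow_succ' x N).symm
      rw [this]; exact pow_le_one₀ hx0.le hx1.le
    nlinarith
  -- Zp x (x*x) N = Qp x (N+1) / (1-x)
  have hZQ : ∀ N, Zp x (x * x) N = Qp x (N + 1) / (1 - x) := by
    intro N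
    rw [Qp_shift]
    field_simp
  have hZtend : Filter.Tendsto (fun N => Zp x (x * x) N) Filter.atTop (nhds (Lq x / (1 - x))) := by
    simp only [hZQ]
    apply Filter.Tendsto.div_const
    exact (Qp_tendsto hx0 hx1).comp (Filter.tendsto_add_atTop_nat 1)
  have hLHS : Filter.Tendsto (fun N => (∑' m, uu x (x * x) m) * Zp x (x * x) N)
      Filter.atTop (nhds ((∑' m, uu x (x * x) m) * (Lq x / (1 - x)))) :=
    hZtend.const_mul _
  -- limit of RHS of iter
  have hRHS : Filter.Tendsto (fun N => ∑' m, uu x ((x * x) * x ^ N) m)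
      Filter.atTop (nhds 1) := by
    have hE : (0:ℝ) < (Cb x)⁻¹ * (Cb x)⁻¹ * (1 - x)⁻¹ := by
      have := Cb_pos (x := x); positivity
    apply tendsto_of_tendsto_of_tendsto_of_le_of_le
      (g := fun _ : ℕ => (1:ℝ))
      (h := fun N : ℕ => 1 + (x * x) * x ^ N * ((Cb x)⁻¹ * (Cb x)⁻¹ * (1 - x)⁻¹))
      tendsto_const_nhds ?_ ?_ ?_
    · have h0 : Filter.Tendsto
          (fun N : ℕ => (x * x) * x ^ N * ((Cb x)⁻¹ * (Cb x)⁻¹ * (1 - x)⁻¹))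
          Filter.atTop (nhds 0) := by
        have h1 := (tendsto_pow_atTop_nhds_zero_of_lt_one hx0.le hx1).const_mul (x * x)
        simpa using h1.mul_const ((Cb x)⁻¹ * (Cb x)⁻¹ * (1 - x)⁻¹)
      simpa using tendsto_const_nhds.add h0
    · intro N
      exact H_ge_one hx0 hx1 (hz0 N) (hzx N)
    · intro N
      exact H_le hx0 hx1 (hz0 N) (hzx N)
  have := Filter.Tendsto.congr (fun N => iter hx0 hx1 N) hLHS
  exact tendsto_nhds_unique this hRHS

end DurfeeAux


open DurfeeAux in
/-- For `0 < x < 1`, `∏_{k≥1} (1 - x^k)⁻¹` equals the convergent series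
`∑_{m≥0} x^(m(m+1)) / ((∏_{i=1}^m (1 - x^i))² · (1 - x^(m+1)))`. -/
theorem tprod_eq_nested_tsum (x : ℝ) (hx0 : 0 < x) (hx1 : x < 1) :
    Summable (fun m : ℕ =>
      x ^ (m * (m + 1)) /
        ((∏ i ∈ Finset.range m, (1 - x ^ (i + 1))) ^ 2 * (1 - x ^ (m + 1)))) ∧
    (∏' k : ℕ, (1 - x ^ (k + 1))⁻¹) =
      ∑' m : ℕ,
        x ^ (m * (m + 1)) /
          ((∏ i ∈ Finset.range m, (1 - x ^ (i + 1))) ^ 2 * (1 - x ^ (m + 1))) := by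
  have h1x : (0:ℝ) < 1 - x := by linarith
  have hxx0 : (0:ℝ) ≤ x * x := by positivity
  have hxxx : x * x ≤ x := by nlinarith
  have hsu := uu_summable hx0 hx1 hxx0 hxxx
  have hpt : ∀ m : ℕ,
      x ^ (m * (m + 1)) /
        ((∏ i ∈ Finset.range m, (1 - x ^ (i + 1))) ^ 2 * (1 - x ^ (m + 1)))
      = uu x (x * x) m / (1 - x) := by
    intro m
    have hZQ : Zp x (x * x) m = Qp x (m + 1) / (1 - x) := by
      rw [Qp_shift]; field_simp
    have hQs : Qp x (m + 1) = Qp x m * (1 - x ^ (m + 1)) := Qp_succ m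
    have hnum : (x * x) ^ m * x ^ (m * (m - 1)) = x ^ (m * (m + 1)) := by
      rw [mul_pow, ← pow_add, ← pow_add]
      congr 1
      cases m with
      | zero => rfl
      | succ k =>
        show k + 1 + (k + 1) + (k + 1) * k = (k + 1) * (k + 2)
        ring
    have hQpos := Qp_pos hx0 hx1 m
    have hQne : Qp x m ≠ 0 := hQpos.ne'
    have hone : (1:ℝ) - x ^ (m + 1) ≠ 0 := (one_sub_pow_pos hx0 hx1 m).ne'
    rw [show (∏ i ∈ Finset.range m, (1 - x ^ (i + 1))) = Qp x m from rfl]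
    unfold uu
    rw [hZQ, hQs, hnum]
    field_simp
  have hsummable : Summable (fun m : ℕ =>
      x ^ (m * (m + 1)) /
        ((∏ i ∈ Finset.range m, (1 - x ^ (i + 1))) ^ 2 * (1 - x ^ (m + 1)))) := by
    rw [show (fun m : ℕ => x ^ (m * (m + 1)) /
        ((∏ i ∈ Finset.range m, (1 - x ^ (i + 1))) ^ 2 * (1 - x ^ (m + 1))))
      = (fun m : ℕ => uu x (x * x) m / (1 - x)) from funext hpt]
    exact hsu.div_const _
  refine ⟨hsummable, ?_⟩
  have hL := hasProd_Q hx0 hx1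
  have hLpos := Lq_pos hx0 hx1
  have hkey := key_eq hx0 hx1
  have hLne : Lq x ≠ 0 := hLpos.ne'
  have htp : (∏' k : ℕ, (1 - x ^ (k + 1))⁻¹) = (Lq x)⁻¹ := by
    have hinv : HasProd (fun k : ℕ => (1 - x ^ (k + 1))⁻¹) (Lq x)⁻¹ := by
      rw [HasProd]
      have h2 := Filter.Tendsto.inv₀ hL hLne
      apply h2.congr
      intro s
      exact (Finset.prod_inv_distrib _).symm
    exact hinv.tprod_eq
  rw [htp]
  have hts : (∑' m : ℕ, x ^ (m * (m + 1)) /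
      ((∏ i ∈ Finset.range m, (1 - x ^ (i + 1))) ^ 2 * (1 - x ^ (m + 1))))
      = (∑' m, uu x (x * x) m) / (1 - x) := by
    rw [show (fun m : ℕ => x ^ (m * (m + 1)) /
        ((∏ i ∈ Finset.range m, (1 - x ^ (i + 1))) ^ 2 * (1 - x ^ (m + 1))))
      = (fun m : ℕ => uu x (x * x) m / (1 - x)) from funext hpt]
    exact tsum_div_const
  rw [hts]
  have h1xne : (1:ℝ) - x ≠ 0 := h1x.ne'
  field_simp at hkey ⊢
  linarith [hkey]
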